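/- arXiv:1208.0312 — 4 statements merged into one kernel-verified Lean document; each statement's English description precedes it below -/
import Mathlib

section
/- Consider the instance with B = 2 consisting of three unit-length jobs, two time slots, and every slot feasible for every job. Then the minimum active time over all integral schedules equals 2, while the minimum fractional active time over all fractional (preemptive) schedules equals 3/2. Hence the ratio 4/3 between integral and fractional optimal active time is attained. -/
open Finset

/-- An integral schedule: each job `j` is assigned a set `A j ⊆ T j` of slots
with `(A j).card = len j`, and every slot is used by at most `B` jobs. -/
def IsIntegralSchedule {J S : Type*} [Fintype J] [DecidableEq S]
    (B : ℕ) (T : J → Finset S) (len : J → ℕ) (A : J → Finset S) : Prop :=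
  (∀ j, A j ⊆ T j) ∧ (∀ j, (A j).card = len j) ∧
    ∀ s : S, (Finset.univ.filter (fun j => s ∈ A j)).card ≤ B

/-- The active time of an integral schedule: the number of slots used by some job. -/
def activeTime {J S : Type*} [Fintype J] [DecidableEq S] (A : J → Finset S) : ℕ :=
  (Finset.univ.biUnion A).card

/-- A fractional (preemptive) schedule. -/
def IsFracSchedule {J S : Type*} [Fintype J] [Fintype S]
    (B : ℕ) (T : J → Finset S) (len : J → ℕ) (x : J → S → ℝ) (a : S → ℝ) : Prop :=
  (∀ j s, 0 ≤ x j s) ∧ (∀ s, 0 ≤ a s ∧ a s ≤ 1) ∧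
    (∀ j s, s ∉ T j → x j s = 0) ∧
    (∀ j, ∑ s, x j s = (len j : ℝ)) ∧
    (∀ j s, x j s ≤ a s) ∧
    (∀ s, ∑ j, x j s ≤ (B : ℝ) * a s)

/-- For the instance with `B = 2`, three unit jobs, two slots, and every slot
feasible for every job: the minimum integral active time is `2` while the minimum
fractional active time is `3/2`, attaining the ratio `4/3`. -/
theorem tight_example_ratio_four_thirds :
    IsLeast {n : ℕ | ∃ A : Fin 3 → Finset (Fin 2),
        IsIntegralSchedule 2 (fun _ : Fin 3 => (Finset.univ : Finset (Fin 2)))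
          (fun _ => 1) A ∧ activeTime A = n} 2 ∧
    IsLeast {c : ℝ | ∃ (x : Fin 3 → Fin 2 → ℝ) (a : Fin 2 → ℝ),
        IsFracSchedule 2 (fun _ : Fin 3 => (Finset.univ : Finset (Fin 2)))
          (fun _ => 1) x a ∧ ∑ s, a s = c} (3 / 2) := by
  constructor
  · constructor
    · refine ⟨fun j => if j = 0 then {0} else {1}, ⟨fun j => by simp, fun j => by
        by_cases h : j = 0 <;> simp [h], fun s => ?_⟩, ?_⟩
      · fin_cases s <;> decide
      · decide
    · rintro n ⟨A, ⟨_, hcard, hcap⟩, hact⟩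
      subst hact
      by_contra h
      push_neg at h
      interval_cases n' : activeTime A
      · -- activeTime 0: but A 0 nonempty
        have h0 : A 0 ⊆ Finset.univ.biUnion A := fun s hs => mem_biUnion.2 ⟨0, mem_univ _, hs⟩
        have h1 := card_le_card h0
        have h2 : (A 0).card = 1 := hcard 0
        unfold activeTime at n'
        omega
      · -- activeTime 1: all jobs in the same slot
        obtain ⟨s, hs⟩ := card_eq_one.1 n'
        have hall : ∀ j : Fin 3, A j = {s} := by
          intro j
          have hsub : A j ⊆ {s} := by
            rw [← hs]; exact fun t ht => mem_biUnion.2 ⟨j, mem_univ _, ht⟩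
          have := hcard j
          exact Finset.eq_of_subset_of_card_le hsub (by simp [this])
        have := hcap s
        have : (Finset.univ.filter (fun j : Fin 3 => s ∈ A j)) = Finset.univ := by
          ext j; simp [hall j]
        rw [this] at *
        simp_all
  · constructor
    · refine ⟨fun _ _ => 1/2, fun _ => 3/4, ⟨fun j s => by norm_num,
        fun s => by norm_num, fun j s h => absurd (mem_univ s) h,
        fun j => by simp, fun j s => by norm_num, fun s => by
          simp [Finset.sum_const]; norm_num⟩, by
          simp [Finset.sum_const]; norm_num⟩
    · rintro c ⟨x, a, ⟨hx0, ha, _, hsum, hxa, hcap⟩, rfl⟩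
      have key : (3 : ℝ) = ∑ j : Fin 3, ∑ s, x j s := by
        simp [hsum]
      rw [Finset.sum_comm] at key
      have h2 : ∑ s : Fin 2, ∑ j : Fin 3, x j s ≤ ∑ s : Fin 2, 2 * a s :=
        Finset.sum_le_sum fun s _ => by simpa using hcap s
      rw [← key, ← Finset.mul_sum] at h2
      linarith
end

section
/- Let B be a positive integer, L > 0 a real number, and x_1, …, x_n nonnegative reals with x_j ≤ L for every j and ∑_{j=1}^n x_j ≤ B·L. Then there exist sets A_1, …, A_n ⊆ [0, L), each a finite union of half-open intervals, such that the Lebesgue measure of A_j equals x_j for every j, and for every t ∈ [0, L) at most B of the sets A_j contain t. (This shows the per-slot constraints ∑_j x_{j,s} ≤ B(1 − i_s) and x_{j,s} + i_s ≤ 1 are sufficient for preemptively executing x_{j,s} units of each job j within 1 − i_s units of time on B processors, with no job running on two processors simultaneously.) -/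
open Finset

/-- Amounts `x j ≤ L` of `n` jobs with total at most `B * L` can be preemptively
executed within the window `[0, L)` on `B` processors: there are sets
`A j ⊆ [0, L)`, each a finite union of half-open intervals, with Lebesgue measure
`x j`, such that at every instant at most `B` jobs are executing. -/
theorem mcnaughton_wraparound_sufficiency
    (B : ℕ) (hB : 0 < B) (L : ℝ) (hL : 0 < L) (n : ℕ)
    (x : Fin n → ℝ) (hx0 : ∀ j, 0 ≤ x j) (hxL : ∀ j, x j ≤ L)
    (hsum : ∑ j, x j ≤ (B : ℝ) * L) :
    ∃ A : Fin n → Set ℝ,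
      (∀ j, A j ⊆ Set.Ico (0 : ℝ) L) ∧
      (∀ j, ∃ I : Finset (ℝ × ℝ), A j = ⋃ p ∈ I, Set.Ico p.1 p.2) ∧
      (∀ j, MeasureTheory.volume (A j) = ENNReal.ofReal (x j)) ∧
      ∀ t ∈ Set.Ico (0 : ℝ) L, Nat.card {j : Fin n // t ∈ A j} ≤ B := by
  classical
  set x' : ℕ → ℝ := fun i => if h : i < n then x ⟨i, h⟩ else 0 with hx'
  have hx'0 : ∀ i, 0 ≤ x' i := by
    intro i
    simp only [hx']
    split
    · exact hx0 _
    · exact le_rfl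
  set f : ℕ → ℝ := fun k => ∑ i ∈ Finset.range k, x' i with hf
  have hfmono : Monotone f := by
    intro a b hab
    exact Finset.sum_le_sum_of_subset_of_nonneg (Finset.range_subset_range.2 hab)
      (fun i _ _ => hx'0 i)
  have hf0 : ∀ k, 0 ≤ f k := fun k => Finset.sum_nonneg fun i _ => hx'0 i
  have hfn : f n = ∑ j, x j := by
    have h1 : f n = ∑ i : Fin n, x' (i : ℕ) := (Fin.sum_univ_eq_sum_range x' n).symm
    rw [h1]
    exact Finset.sum_congr rfl fun j _ => by simp [hx', j.isLt]
  have hfB : ∀ m, m ≤ n → f m ≤ (B : ℝ) * L := fun m hm =>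
    (hfmono hm).trans (hfn ▸ hsum)
  have hstep : ∀ j : Fin n, f ((j : ℕ) + 1) = f (j : ℕ) + x j := by
    intro j
    rw [hf]
    simp [Finset.sum_range_succ, hx', j.isLt]
  set k : Fin n → ℕ := fun j => ⌊f (j : ℕ) / L⌋₊ with hk
  have hkle : ∀ j : Fin n, (k j : ℝ) * L ≤ f (j : ℕ) := by
    intro j
    have h1 := Nat.floor_le (div_nonneg (hf0 (j : ℕ)) hL.le)
    have h2 : ((k j : ℝ)) ≤ f (j : ℕ) / L := h1
    calc (k j : ℝ) * L ≤ (f (j : ℕ) / L) * L := by nlinarith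
      _ = f (j : ℕ) := div_mul_cancel₀ _ hL.ne'
  have hklt : ∀ j : Fin n, f (j : ℕ) < ((k j : ℝ) + 1) * L := by
    intro j
    have h1 := Nat.lt_floor_add_one (f (j : ℕ) / L)
    calc f (j : ℕ) = (f (j : ℕ) / L) * L := (div_mul_cancel₀ _ hL.ne').symm
      _ < ((k j : ℝ) + 1) * L := by nlinarith
  set A : Fin n → Set ℝ := fun j =>
    Set.Ico (f (j : ℕ) - (k j : ℝ) * L) (min (f ((j : ℕ) + 1) - (k j : ℝ) * L) L) ∪
    Set.Ico 0 (f ((j : ℕ) + 1) - ((k j : ℝ) + 1) * L) with hA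
  have hmem : ∀ (t : ℝ), 0 ≤ t → ∀ j : Fin n, t ∈ A j →
      ∃ m : ℕ, f (j : ℕ) ≤ t + (m : ℝ) * L ∧ t + (m : ℝ) * L < f ((j : ℕ) + 1) := by
    intro t ht j hj
    rcases hj with h | h
    · refine ⟨k j, by linarith [h.1], ?_⟩
      have := (lt_min_iff.1 h.2).1
      linarith
    · refine ⟨k j + 1, ?_, ?_⟩
      · push_cast
        have := hklt j
        linarith
      · push_cast
        linarith [h.2]
  refine ⟨A, ?_, ?_, ?_, ?_⟩
  · -- subset
    intro j
    apply Set.union_subset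
    · apply Set.Ico_subset_Ico
      · linarith [hkle j]
      · exact min_le_right _ _
    · apply Set.Ico_subset_Ico le_rfl
      have h1 := hklt j
      have h2 := hstep j
      have h3 := hxL j
      linarith
  · -- finite union of Ico
    intro j
    refine ⟨{(f (j : ℕ) - (k j : ℝ) * L, min (f ((j : ℕ) + 1) - (k j : ℝ) * L) L),
             ((0 : ℝ), f ((j : ℕ) + 1) - ((k j : ℝ) + 1) * L)}, ?_⟩
    rw [hA]
    rw [Finset.set_biUnion_insert, Finset.set_biUnion_singleton]
  · -- measure
    intro j
    have hdisj : Disjoint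
        (Set.Ico (f (j : ℕ) - (k j : ℝ) * L) (min (f ((j : ℕ) + 1) - (k j : ℝ) * L) L))
        (Set.Ico (0 : ℝ) (f ((j : ℕ) + 1) - ((k j : ℝ) + 1) * L)) := by
      rw [Set.disjoint_left]
      rintro a ⟨ha1, _⟩ ⟨_, ha4⟩
      have h2 := hstep j
      have h3 := hxL j
      linarith
    have : MeasureTheory.volume (A j) =
        MeasureTheory.volume
          (Set.Ico (f (j : ℕ) - (k j : ℝ) * L) (min (f ((j : ℕ) + 1) - (k j : ℝ) * L) L)) +
        MeasureTheory.volume (Set.Ico (0 : ℝ) (f ((j : ℕ) + 1) - ((k j : ℝ) + 1) * L)) := by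
      rw [hA]
      exact MeasureTheory.measure_union hdisj measurableSet_Ico
    rw [this, Real.volume_Ico, Real.volume_Ico]
    have hstepj := hstep j
    rcases le_or_gt (f ((j : ℕ) + 1) - (k j : ℝ) * L) L with hc | hc
    · rw [min_eq_left hc]
      have h2 : f ((j : ℕ) + 1) - ((k j : ℝ) + 1) * L - 0 ≤ 0 := by linarith
      rw [ENNReal.ofReal_of_nonpos h2, add_zero]
      congr 1
      linarith
    · rw [min_eq_right hc.le]
      rw [← ENNReal.ofReal_add (by linarith [hklt j]) (by linarith)]
      congr 1
      linarith
  · -- card bound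
    intro t ht
    have hchar : ∀ j : {j : Fin n // t ∈ A j}, ∃ m : Fin B,
        f ((j.1 : ℕ)) ≤ t + (m : ℝ) * L ∧ t + (m : ℝ) * L < f ((j.1 : ℕ) + 1) := by
      intro j
      obtain ⟨m, hm1, hm2⟩ := hmem t ht.1 j.1 j.2
      have hmB : m < B := by
        have h1 : t + (m : ℝ) * L < (B : ℝ) * L :=
          lt_of_lt_of_le hm2 (hfB _ (Nat.succ_le_of_lt j.1.isLt))
        by_contra hcon
        push_neg at hcon
        have h2 : (B : ℝ) * L ≤ (m : ℝ) * L := by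
          have : (B : ℝ) ≤ (m : ℝ) := Nat.cast_le.2 hcon
          nlinarith
        linarith [ht.1]
      exact ⟨⟨m, hmB⟩, hm1, hm2⟩
    choose g hg1 hg2 using hchar
    have hginj : Function.Injective g := by
      intro j1 j2 hgeq
      have h1 := hg1 j1
      have h2 := hg2 j1
      have h3 := hg1 j2
      have h4 := hg2 j2
      rw [hgeq] at h1 h2
      have hnat : (j1.1 : ℕ) = (j2.1 : ℕ) := by
        rcases lt_trichotomy ((j1.1 : ℕ)) ((j2.1 : ℕ)) with h | h | h
        · exfalso
          have := hfmono (Nat.succ_le_of_lt h)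
          linarith
        · exact h
        · exfalso
          have := hfmono (Nat.succ_le_of_lt h)
          linarith
      exact Subtype.ext (Fin.ext hnat)
    have hcard := Fintype.card_le_of_injective g hginj
    rw [Nat.card_eq_fintype_card]
    simpa using hcard
end

section
/- Let X be a finite set with |X| = 3q, and let S_1, …, S_m be subsets of X each of cardinality exactly 3. Consider the unit-job multi-slot instance with B = 3 whose jobs are the elements of X, whose time slots are the indices {1, …, m}, and where the feasible slots of element x are {i : x ∈ S_i}. Then there exists a subset A ⊆ {1, …, m} with |A| = q such that the sets {S_i : i ∈ A} are pairwise disjoint and cover X (an exact cover) if and only if there exists a schedule of the full job set X whose active time is at most q. -/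
open Finset

/-- Reduction from 3-Exact-Cover: with `|X| = 3q`, sets `S i` of size 3, `B = 3`,
jobs being the elements of `X`, slots being the indices, and element `x` feasible
in slot `i` iff `x ∈ S i`: an exact cover of size `q` exists iff there is a
schedule of all jobs with active time at most `q`. -/
theorem exact_cover_iff_schedule_B3
    {X : Type*} [Fintype X] [DecidableEq X] (q m : ℕ)
    (hX : Fintype.card X = 3 * q)
    (S : Fin m → Finset X) (hS : ∀ i, (S i).card = 3) :
    (∃ A : Finset (Fin m), A.card = q ∧
        (∀ i ∈ A, ∀ j ∈ A, i ≠ j → Disjoint (S i) (S j)) ∧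
        ∀ x : X, ∃ i ∈ A, x ∈ S i) ↔
    (∃ σ : X → Fin m, (∀ x : X, x ∈ S (σ x)) ∧
        (∀ i : Fin m, (Finset.univ.filter (fun x => σ x = i)).card ≤ 3) ∧
        (Finset.univ.image σ).card ≤ q) := by
  constructor
  · rintro ⟨A, hcard, hdisj, hcov⟩
    choose σ hσA hσS using hcov
    refine ⟨σ, hσS, ?_, ?_⟩
    · intro i
      calc (univ.filter (fun x => σ x = i)).card ≤ (S i).card := by
            apply card_le_card
            intro x hx
            simp only [mem_filter] at hx
            exact hx.2 ▸ hσS x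
        _ = 3 := hS i
    · calc (univ.image σ).card ≤ A.card := by
            apply card_le_card
            intro i hi
            simp only [mem_image] at hi
            obtain ⟨x, _, rfl⟩ := hi
            exact hσA x
        _ = q := hcard
  · rintro ⟨σ, hfeas, hfib, him⟩
    set A := univ.image σ with hA
    have hmemA : ∀ x : X, σ x ∈ A := fun x => mem_image_of_mem σ (mem_univ x)
    have hsum : ∑ i ∈ A, (univ.filter (fun x => σ x = i)).card = 3 * q := by
      rw [← card_eq_sum_card_fiberwise (fun x _ => hmemA x), card_univ, hX]
    have hAq : A.card = q := le_antisymm him (by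
      by_contra h
      push_neg at h
      have : ∑ i ∈ A, (univ.filter (fun x => σ x = i)).card ≤ ∑ _i ∈ A, 3 :=
        Finset.sum_le_sum (fun i _ => hfib i)
      rw [hsum, Finset.sum_const, smul_eq_mul] at this
      omega)
    have heach : ∀ i ∈ A, (univ.filter (fun x => σ x = i)).card = 3 := by
      by_contra h
      push_neg at h
      obtain ⟨i, hiA, hi3⟩ := h
      have hlt : (univ.filter (fun x => σ x = i)).card < 3 :=
        lt_of_le_of_ne (hfib i) hi3
      have : ∑ j ∈ A, (univ.filter (fun x => σ x = j)).card < ∑ _j ∈ A, 3 :=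
        Finset.sum_lt_sum (fun j _ => hfib j) ⟨i, hiA, hlt⟩
      rw [hsum, Finset.sum_const, smul_eq_mul, hAq] at this
      omega
    have hfibS : ∀ i ∈ A, univ.filter (fun x => σ x = i) = S i := by
      intro i hiA
      apply Finset.eq_of_subset_of_card_le
      · intro x hx
        simp only [mem_filter] at hx
        exact hx.2 ▸ hfeas x
      · rw [hS i, heach i hiA]
    refine ⟨A, hAq, ?_, ?_⟩
    · intro i hi j hj hij
      rw [← hfibS i hi, ← hfibS j hj]
      simp only [Finset.disjoint_left, mem_filter]
      rintro x ⟨_, rfl⟩ ⟨_, h2⟩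
      exact hij h2
    · intro x
      exact ⟨σ x, hmemA x, hfeas x⟩
end

section
/- Let X be a finite set with |X| = 3q, and let S_1, …, S_m be subsets of X each of cardinality exactly 3. Consider the instance with B = 1 whose jobs are the indices {1, …, m}, each job i having length ℓ_i = 3 and feasible slot set T_i = S_i, and whose time slots are the elements of X. Then there exists a subset A ⊆ {1, …, m} of cardinality q such that every job in A can be completely scheduled (i.e., each i ∈ A is assigned a set A_i ⊆ S_i with |A_i| = 3 and every slot lies in at most one A_i) if and only if there exists an exact cover of X, i.e., q of the sets S_i that are pairwise disjoint and cover X. -/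
open Finset

/-- Reduction from 3-Exact-Cover for length-3 jobs on one processor (`B = 1`):
with `|X| = 3q` and jobs `i ∈ Fin m` of length 3 feasible exactly in the slots
`S i` (where `|S i| = 3`), one can completely schedule some `q` jobs iff there is
an exact cover of `X` by `q` of the sets `S i`. -/
theorem exact_cover_iff_q_length3_jobs_schedulable
    {X : Type*} [Fintype X] [DecidableEq X] (q m : ℕ)
    (hX : Fintype.card X = 3 * q)
    (S : Fin m → Finset X) (hS : ∀ i, (S i).card = 3) :
    (∃ (A : Finset (Fin m)) (f : Fin m → Finset X), A.card = q ∧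
        (∀ i ∈ A, f i ⊆ S i ∧ (f i).card = 3) ∧
        ∀ x : X, (A.filter (fun i => x ∈ f i)).card ≤ 1) ↔
    (∃ A : Finset (Fin m), A.card = q ∧
        (∀ i ∈ A, ∀ j ∈ A, i ≠ j → Disjoint (S i) (S j)) ∧
        ∀ x : X, ∃ i ∈ A, x ∈ S i) := by
  constructor
  · rintro ⟨A, f, hcard, hf, hone⟩
    have hfe : ∀ i ∈ A, f i = S i := fun i hi =>
      Finset.eq_of_subset_of_card_le (hf i hi).1 (by rw [(hf i hi).2, hS i])
    have hdisj : ∀ i ∈ A, ∀ j ∈ A, i ≠ j → Disjoint (S i) (S j) := by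
      intro i hi j hj hij
      rw [Finset.disjoint_left]
      intro x hxi hxj
      have h2 : ({i, j} : Finset (Fin m)) ⊆ A.filter (fun k => x ∈ f k) := by
        intro k hk
        simp only [Finset.mem_insert, Finset.mem_singleton] at hk
        rcases hk with rfl | rfl
        · exact Finset.mem_filter.2 ⟨hi, (hfe k hi) ▸ hxi⟩
        · exact Finset.mem_filter.2 ⟨hj, (hfe k hj) ▸ hxj⟩
      have h3 := Finset.card_le_card h2
      have h4 := hone x
      rw [Finset.card_insert_of_notMem (by simpa using hij),
        Finset.card_singleton] at h3
      omega
    refine ⟨A, hcard, hdisj, ?_⟩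
    have hU : (A.biUnion S) = Finset.univ := by
      apply Finset.eq_univ_of_card
      rw [Finset.card_biUnion (fun i hi j hj hij => hdisj i hi j hj hij), hX]
      simp [hS, hcard, mul_comm]
    intro x
    have : x ∈ A.biUnion S := hU ▸ Finset.mem_univ x
    simpa using this
  · rintro ⟨A, hcard, hdisj, hcov⟩
    refine ⟨A, S, hcard, fun i _ => ⟨le_refl _, hS i⟩, fun x => ?_⟩
    rw [Finset.card_le_one]
    intro i hi j hj
    simp only [Finset.mem_filter] at hi hj
    by_contra hij
    exact Finset.disjoint_left.1 (hdisj i hi.1 j hj.1 hij) hi.2 hj.2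
end
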